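/- For any automorphism φ of F(A) there exists a constant M (depending only on φ and the basis A) such that for every reduced word w, the image φ(C¹_w) of the cylinder C¹_w is a union of at most M cylinders; i.e., the cardinality of the reduced set φ*_A(w) with C¹_{φ*_A(w)} = φ(C¹_w) is bounded above by a constant independent of w. -/

import Mathlib

open FreeGroup

variable {α : Type*}

/-- Inverse of a letter `(x, b)` in the alphabet `A ∪ A⁻¹`. -/
def linv (x : α × Bool) : α × Bool := (x.1, !x.2)

/-- The boundary `∂F(A)`: infinite reduced words over `A ∪ A⁻¹`. -/
def Bd (α : Type*) : Type _ := {ξ : ℕ → α × Bool // ∀ n, ξ (n + 1) ≠ linv (ξ n)}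

/-- The cylinder `C¹_w` of all infinite reduced words with prefix `w`. -/
def Cyl (w : List (α × Bool)) : Set (Bd α) :=
  {ξ | ∀ i, (h : i < w.length) → ξ.1 i = w.get ⟨i, h⟩}

/-- The length-`m` prefix of an infinite reduced word. -/
def pre (ξ : Bd α) (m : ℕ) : List (α × Bool) := List.ofFn (fun i : Fin m => ξ.1 i)

/-- `Φ` is the boundary extension of the automorphism `φ`:
for every `ξ ∈ ∂F(A)`, the reduced words `φ(ξ|_m)` converge to `Φ ξ`. -/
def ExtendsBd [DecidableEq α] (φ : FreeGroup α ≃* FreeGroup α) (Φ : Bd α → Bd α) : Prop :=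
  ∀ ξ : Bd α, ∀ k : ℕ, ∃ n : ℕ, ∀ m, n ≤ m →
    ((φ (FreeGroup.mk (pre ξ m))).toWord).take k = List.ofFn (fun i : Fin k => (Φ ξ).1 i)

/-- `Concat g ξ η` : `η` is the reduced concatenation `g · ξ` (left translation of a
boundary point by a group element): some terminal segment of (the reduced word of) `g`
cancels against an initial segment of `ξ`, and `η` is the concatenation of the rest. -/
def Concat [DecidableEq α] (g : FreeGroup α) (ξ η : Bd α) : Prop :=
  ∃ ℓ : ℕ, ∃ hℓ : ℓ ≤ g.toWord.length,
    (∀ i, (h : i < ℓ) → ξ.1 i = linv (g.toWord.get ⟨g.toWord.length - 1 - i, by omega⟩)) ∧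
    (∀ n : ℕ, η.1 n =
      if h : n < g.toWord.length - ℓ then g.toWord.get ⟨n, by omega⟩
      else ξ.1 (n - (g.toWord.length - ℓ) + ℓ))

/-- The vertex `g` of the Cayley tree lies on the bi-infinite geodesic from `ξ` to `η`. -/
def OnGeod [DecidableEq α] (g : FreeGroup α) (ξ η : Bd α) : Prop :=
  ∃ ξ' η' : Bd α, Concat g⁻¹ ξ ξ' ∧ Concat g⁻¹ η η' ∧ ξ'.1 0 ≠ η'.1 0

/-- The double cylinder `C²_{[v,w]}`. -/
def DblCyl [DecidableEq α] (v w : FreeGroup α) : Set (Bd α × Bd α) :=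
  {p | p.1 ≠ p.2 ∧ OnGeod v p.1 p.2 ∧ OnGeod w p.1 p.2}

/-- Letter-permuting automorphism: every generator maps to a single letter. -/
def IsPermAut [DecidableEq α] (φ : FreeGroup α ≃* FreeGroup α) : Prop :=
  ∀ x : α, ((φ (FreeGroup.of x)).toWord).length = 1

/-- Elementary Nielsen automorphism: `a ↦ ab`, all other generators fixed. -/
def IsNielsenAut (φ : FreeGroup α ≃* FreeGroup α) : Prop :=
  ∃ a b : α, a ≠ b ∧ φ (FreeGroup.of a) = FreeGroup.of a * FreeGroup.of b ∧
    ∀ x : α, x ≠ a → φ (FreeGroup.of x) = FreeGroup.of x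

set_option linter.unusedSectionVars false

namespace S13
open List FreeGroup

variable [DecidableEq α]

@[simp] lemma linv_linv (x : α × Bool) : linv (linv x) = x := by simp [linv]

lemma linv_ne (x : α × Bool) : linv x ≠ x := by
  simp [linv, Prod.ext_iff]

def Reduced (l : List (α × Bool)) : Prop := List.Chain' (fun p q => q ≠ linv p) l

lemma reduced_nil : Reduced ([] : List (α × Bool)) := List.isChain_nil

lemma Reduced.append_left {l1 l2 : List (α × Bool)} (h : Reduced (l1 ++ l2)) : Reduced l1 :=
  (List.isChain_append.mp h).1

lemma Reduced.append_right {l1 l2 : List (α × Bool)} (h : Reduced (l1 ++ l2)) : Reduced l2 :=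
  (List.isChain_append.mp h).2.1

lemma Reduced.take {l : List (α × Bool)} (h : Reduced l) (n : ℕ) : Reduced (l.take n) := by
  have := h; rw [← List.take_append_drop n l] at this; exact this.append_left

lemma Reduced.drop {l : List (α × Bool)} (h : Reduced l) (n : ℕ) : Reduced (l.drop n) := by
  have := h; rw [← List.take_append_drop n l] at this; exact this.append_right

lemma reduced_append {l1 l2 : List (α × Bool)} (h1 : Reduced l1) (h2 : Reduced l2)
    (h : ∀ x ∈ l1.getLast?, ∀ y ∈ l2.head?, y ≠ linv x) : Reduced (l1 ++ l2) :=
  List.isChain_append.mpr ⟨h1, h2, h⟩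

lemma reduce_eq_self {l : List (α × Bool)} (h : Reduced l) : reduce l = l := by
  induction l with
  | nil => rfl
  | cons x t ih =>
    have ht : Reduced t := h.tail
    rw [reduce.cons, ih ht]
    cases t with
    | nil => rfl
    | cons y t' =>
      have hxy : y ≠ linv x := (List.isChain_cons_cons.mp h).1
      have : ¬(x.1 = y.1 ∧ x.2 = !y.2) := by
        rintro ⟨h1, h2⟩
        exact hxy (by simp [linv, Prod.ext_iff, h1.symm, h2])
      simp [this]

lemma toWord_mk_reduced {l : List (α × Bool)} (h : Reduced l) : (mk l).toWord = l := by
  rw [toWord_mk, reduce_eq_self h]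

lemma reduced_toWord (g : FreeGroup α) : Reduced g.toWord := by
  rw [Reduced, List.Chain', List.isChain_iff_getElem]
  intro i hi
  by_contra hbad
  have e0 : g.toWord = g.toWord.take i ++ g.toWord.drop i := (List.take_append_drop i g.toWord).symm
  have e1 : g.toWord.drop i = g.toWord[i] :: g.toWord.drop (i+1) :=
    List.drop_eq_getElem_cons (by omega)
  have e2 : g.toWord.drop (i+1) = g.toWord[i+1] :: g.toWord.drop (i+2) :=
    List.drop_eq_getElem_cons (by omega)
  set x := g.toWord[i] with hx
  have hlinv : g.toWord[i+1] = (x.1, !x.2) := by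
    simpa [linv] using hbad
  have hdecomp : reduce g.toWord =
      g.toWord.take i ++ (x.1, x.2) :: (x.1, !x.2) :: g.toWord.drop (i+2) := by
    rw [reduce_toWord]
    conv_lhs => rw [e0, e1, e2]
    simp [hlinv]
  exact reduce.not hdecomp

/-- Cancellation structure between two reduced words. -/
def IsCanc (l1 l2 : List (α × Bool)) (c : ℕ) : Prop :=
  c ≤ l1.length ∧ c ≤ l2.length ∧
  (∀ i < c, (l1[l1.length - 1 - i]?).map linv = l2[i]?) ∧
  (c < l1.length → c < l2.length → (l1[l1.length - 1 - c]?).map linv ≠ l2[c]?)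

lemma isCanc_unique {l1 l2 : List (α × Bool)} {c c' : ℕ}
    (h : IsCanc l1 l2 c) (h' : IsCanc l1 l2 c') : c = c' := by
  rcases h with ⟨ha, hb, hm, hf⟩
  rcases h' with ⟨ha', hb', hm', hf'⟩
  by_contra hne
  rcases Nat.lt_or_ge c c' with hlt | hge
  · exact hf (by omega) (by omega) (hm' c hlt)
  · have hlt : c' < c := by omega
    exact hf' (by omega) (by omega) (hm c' hlt)

lemma mul_word : ∀ {l1 l2 : List (α × Bool)}, Reduced l1 → Reduced l2 →
    ∃ c, IsCanc l1 l2 c ∧ (mk l1 * mk l2).toWord = l1.take (l1.length - c) ++ l2.drop c := by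
  intro l1
  induction l1 using List.reverseRecOn with
  | nil =>
    intro l2 _ h2
    refine ⟨0, ⟨by simp, by simp, by simp, by simp⟩, ?_⟩
    have : mk ([] : List (α × Bool)) = 1 := by
      rw [← FreeGroup.toWord_one (α := α)]; exact (mk_toWord)
    simp [this, toWord_mk_reduced h2]
  | append_singleton l1' x ih =>
    intro l2 h1 h2
    cases l2 with
    | nil =>
      refine ⟨0, ⟨by simp, by simp, by simp, by simp⟩, ?_⟩
      have : mk ([] : List (α × Bool)) = 1 := by
        rw [← FreeGroup.toWord_one (α := α)]; exact (mk_toWord)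
      simp [this, toWord_mk_reduced h1]
    | cons y l2' =>
      by_cases hxy : y = linv x
      · -- cancellation step
        have h1' : Reduced l1' := h1.append_left
        have h2' : Reduced l2' := h2.tail
        obtain ⟨c', ⟨hca, hcb, hcm, hcf⟩, heq⟩ := ih h1' h2'
        have key : mk (l1' ++ [x]) * mk (y :: l2') = mk l1' * mk l2' := by
          rw [mul_mk, mul_mk]
          have : l1' ++ [x] ++ y :: l2' = l1' ++ (x.1, x.2) :: (x.1, !x.2) :: l2' := by
            simp [hxy, linv]
          rw [this]
          rw [← quot_mk_eq_mk, ← quot_mk_eq_mk]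
          exact Quot.sound (Red.Step.not)
        refine ⟨c' + 1, ⟨?_, ?_, ?_, ?_⟩, ?_⟩
        · simp; omega
        · simp; omega
        · intro i hi
          rcases Nat.eq_zero_or_pos i with rfl | hpos
          · have hidx : (l1' ++ [x]).length - 1 - 0 = l1'.length := by simp
            rw [hidx]
            have : (l1' ++ [x])[l1'.length]? = some x := by
              simp
            simp [this, hxy]
          · obtain ⟨j, rfl⟩ := Nat.exists_eq_add_of_lt hpos
            have hj : j < c' := by omega
            have hj1 : j < l1'.length := by omega
            have hidx : (l1' ++ [x]).length - 1 - (0 + j + 1) = l1'.length - 1 - j := by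
              simp; omega
            rw [hidx]
            have e1 : (l1' ++ [x])[l1'.length - 1 - j]? = l1'[l1'.length - 1 - j]? := by
              rw [List.getElem?_append_left (by omega)]
            have e2 : (y :: l2')[0 + j + 1]? = l2'[j]? := by simp
            rw [e1, e2]
            exact hcm j hj
        · intro hc1 hc2
          have hc1' : c' < l1'.length := by simp at hc1; omega
          have hc2' : c' < l2'.length := by simp at hc2; omega
          have hidx : (l1' ++ [x]).length - 1 - (c' + 1) = l1'.length - 1 - c' := by
            simp; omega
          rw [hidx]
          have e1 : (l1' ++ [x])[l1'.length - 1 - c']? = l1'[l1'.length - 1 - c']? := by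
            rw [List.getElem?_append_left (by omega)]
          have e2 : (y :: l2')[c' + 1]? = l2'[c']? := by simp
          rw [e1, e2]
          exact hcf hc1' hc2'
        · rw [key, heq]
          have htk : (l1' ++ [x]).take ((l1' ++ [x]).length - (c' + 1)) =
              l1'.take (l1'.length - c') := by
            have : (l1' ++ [x]).length - (c' + 1) = l1'.length - c' := by
              simp only [List.length_append, List.length_singleton]; omega
            rw [this, List.take_append_of_le_length (by omega)]
          rw [htk]
          rfl
      · -- no cancellation
        have hred : Reduced ((l1' ++ [x]) ++ y :: l2') := by
          apply reduced_append h1 h2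
          intro a ha b hb
          have : a = x := by
            simp [List.getLast?_append] at ha
            exact ha.symm
          have : b = y := by simp at hb; exact hb.symm
          subst_vars
          exact hxy
        refine ⟨0, ⟨by simp, by simp, by simp, ?_⟩, ?_⟩
        · intro hl1 _
          have hidx : (l1' ++ [x]).length - 1 - 0 = l1'.length := by simp
          rw [hidx]
          have : (l1' ++ [x])[l1'.length]? = some x := by simp
          rw [this]
          simp only [List.getElem?_cons_zero]
          intro hcon
          apply hxy
          simpa [linv] using (Option.some_injective _ hcon).symm
        · rw [mul_mk, toWord_mk_reduced hred]
          simp only [Nat.sub_zero, List.drop_zero, List.take_length]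

lemma exists_canc (g h : FreeGroup α) :
    ∃ c, IsCanc g.toWord h.toWord c ∧
      (g * h).toWord = g.toWord.take (g.toWord.length - c) ++ h.toWord.drop c := by
  have := mul_word (reduced_toWord g) (reduced_toWord h)
  simpa [mk_toWord] using this

lemma len_mul_formula {g h : FreeGroup α} {c : ℕ} (hc : IsCanc g.toWord h.toWord c)
    (heq : (g * h).toWord = g.toWord.take (g.toWord.length - c) ++ h.toWord.drop c) :
    (g * h).toWord.length = (g.toWord.length - c) + (h.toWord.length - c) := by
  rw [heq]
  simp only [List.length_append, List.length_take, List.length_drop]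
  omega

lemma len_mul_le (g h : FreeGroup α) :
    (g * h).toWord.length ≤ g.toWord.length + h.toWord.length := by
  obtain ⟨c, hc, heq⟩ := exists_canc g h
  rw [len_mul_formula hc heq]
  omega

@[simp] lemma len_inv (g : FreeGroup α) : g⁻¹.toWord.length = g.toWord.length := by
  rw [toWord_inv, invRev_length]

/-- Word distance in the Cayley tree. -/
def dd (g h : FreeGroup α) : ℕ := ((g⁻¹ * h).toWord).length

lemma dd_translate (g x y : FreeGroup α) : dd (g * x) (g * y) = dd x y := by
  unfold dd
  rw [mul_inv_rev, mul_assoc, inv_mul_cancel_left]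

lemma dd_one_left (g : FreeGroup α) : dd 1 g = g.toWord.length := by
  simp [dd]

lemma dd_self (g : FreeGroup α) : dd g g = 0 := by simp [dd]

lemma dd_symm (g h : FreeGroup α) : dd g h = dd h g := by
  unfold dd
  rw [← len_inv (g⁻¹ * h), mul_inv_rev, inv_inv]

lemma dd_triangle (x y z : FreeGroup α) : dd x z ≤ dd x y + dd y z := by
  unfold dd
  have : x⁻¹ * z = (x⁻¹ * y) * (y⁻¹ * z) := by group
  rw [this]
  exact len_mul_le _ _

/-- `m` lies on the geodesic between `x` and `y`. -/
def Btw (x m y : FreeGroup α) : Prop := dd x m + dd m y = dd x y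

lemma btw_translate {g x m y : FreeGroup α} : Btw (g * x) (g * m) (g * y) ↔ Btw x m y := by
  unfold Btw
  rw [dd_translate, dd_translate, dd_translate]

lemma invRev_getElem? (l : List (α × Bool)) (i : ℕ) (hi : i < l.length) :
    (invRev l)[l.length - 1 - i]? = (l[i]?).map linv := by
  have hrfl : FreeGroup.invRev l = (l.map linv).reverse := rfl
  rw [hrfl, List.getElem?_reverse (by rw [List.length_map]; omega)]
  rw [List.length_map, show l.length - 1 - (l.length - 1 - i) = i by omega]
  simp [List.getElem?_map]

lemma btw_one_iff (x y : FreeGroup α) :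
    Btw x 1 y ↔ (x = 1 ∨ y = 1 ∨ x.toWord[0]? ≠ y.toWord[0]?) := by
  obtain ⟨c, hc, heq⟩ := exists_canc x⁻¹ y
  obtain ⟨hc1, hc2, hcm, hcf⟩ := hc
  have hlen := len_mul_formula ⟨hc1, hc2, hcm, hcf⟩ heq
  have hxlen : x⁻¹.toWord.length = x.toWord.length := len_inv x
  have hbtw_iff : Btw x 1 y ↔ c = 0 := by
    have h1 : dd x 1 = x.toWord.length := by simp [dd]
    have h2 : dd 1 y = y.toWord.length := dd_one_left y
    have h3 : dd x y = (x⁻¹ * y).toWord.length := rfl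
    unfold Btw
    rw [h1, h2, h3, hlen, hxlen]
    have hc1' := hc1
    rw [hxlen] at hc1'
    omega
  have hmatch0 : 0 < x.toWord.length →
      ((x⁻¹.toWord)[x⁻¹.toWord.length - 1 - 0]?).map linv = x.toWord[0]? := by
    intro h0
    rw [toWord_inv, invRev_length, invRev_getElem? _ _ h0, Option.map_map]
    have hid : (linv ∘ linv : α × Bool → α × Bool) = id := by funext t; simp
    rw [hid, Option.map_id]
    rfl
  rw [hbtw_iff]
  constructor
  · intro hc0
    subst hc0
    by_cases hx1 : x = 1
    · exact Or.inl hx1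
    by_cases hy1 : y = 1
    · exact Or.inr (Or.inl hy1)
    refine Or.inr (Or.inr ?_)
    have hx0 : 0 < x.toWord.length := by
      rcases Nat.eq_zero_or_pos x.toWord.length with h | h
      · exact absurd (toWord_eq_nil_iff.mp (List.length_eq_zero_iff.mp h)) hx1
      · exact h
    have hy0 : 0 < y.toWord.length := by
      rcases Nat.eq_zero_or_pos y.toWord.length with h | h
      · exact absurd (toWord_eq_nil_iff.mp (List.length_eq_zero_iff.mp h)) hy1
      · exact h
    have hne := hcf (by omega) hy0
    rw [hmatch0 hx0] at hne
    exact hne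
  · intro h
    have h0 : IsCanc x⁻¹.toWord y.toWord 0 := by
      refine ⟨Nat.zero_le _, Nat.zero_le _, fun i hi => absurd hi (Nat.not_lt_zero i), ?_⟩
      intro hl1 hl2
      rcases h with rfl | h
      · simp at hl1
      rcases h with rfl | h
      · simp at hl2
      · rw [hmatch0 (by rw [← hxlen]; exact hl1)]
        exact h
    exact isCanc_unique ⟨hc1, hc2, hcm, hcf⟩ h0

lemma btw_tree {x m z : FreeGroup α} (y : FreeGroup α) (h : Btw x m z) :
    Btw x m y ∨ Btw y m z := by
  have key : ∀ u v : FreeGroup α, Btw u m v ↔ Btw (m⁻¹ * u) 1 (m⁻¹ * v) := by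
    intro u v
    have h1 : (1 : FreeGroup α) = m⁻¹ * m := by group
    rw [h1]
    exact (btw_translate (g := m⁻¹)).symm
  rw [key] at h
  rw [key x y, key y z, btw_one_iff, btw_one_iff]
  rw [btw_one_iff] at h
  rcases h with h | h | h
  · exact Or.inl (Or.inl h)
  · exact Or.inr (Or.inr (Or.inl h))
  · by_cases hxy : (m⁻¹ * x).toWord[0]? = (m⁻¹ * y).toWord[0]?
    · refine Or.inr (Or.inr (Or.inr ?_))
      intro he
      exact h (hxy.trans he)
    · exact Or.inl (Or.inr (Or.inr hxy))

lemma btw_crossing (p : ℕ → FreeGroup α) (m : FreeGroup α) :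
    ∀ n s t, t - s = n → s < t → Btw (p s) m (p t) →
      ∃ j, s ≤ j ∧ j < t ∧ Btw (p j) m (p (j + 1)) := by
  intro n
  induction n with
  | zero => intro s t h hst _; omega
  | succ n ih =>
    intro s t h hst hbtw
    by_cases hstep : s + 1 = t
    · exact ⟨s, le_refl s, by omega, by rwa [hstep]⟩
    · rcases btw_tree (p (s + 1)) hbtw with h1 | h1
      · exact ⟨s, le_refl s, by omega, h1⟩
      · obtain ⟨j, hj1, hj2, hj3⟩ := ih (s + 1) t (by omega) (by omega) h1
        exact ⟨j, by omega, hj2, hj3⟩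

lemma btw_of_prefix {g : FreeGroup α} {n : ℕ} (hn : n ≤ g.toWord.length) :
    Btw 1 (mk (g.toWord.take n)) g ∧ (mk (g.toWord.take n)).toWord = g.toWord.take n := by
  have hred : Reduced (g.toWord.take n) := (reduced_toWord g).take n
  have htw : (mk (g.toWord.take n)).toWord = g.toWord.take n := toWord_mk_reduced hred
  refine ⟨?_, htw⟩
  have hsplit : mk (g.toWord.take n) * mk (g.toWord.drop n) = g := by
    rw [mul_mk, List.take_append_drop, mk_toWord]
  have hinv : (mk (g.toWord.take n))⁻¹ * g = mk (g.toWord.drop n) :=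
    inv_mul_eq_iff_eq_mul.mpr hsplit.symm
  unfold Btw dd
  rw [hinv]
  simp only [inv_one, one_mul]
  rw [toWord_mk_reduced ((reduced_toWord g).drop n), htw]
  simp only [List.length_take, List.length_drop]
  omega

lemma mk_nil : (mk ([] : List (α × Bool))) = 1 := by
  rw [← FreeGroup.toWord_one (α := α)]; exact mk_toWord

section Lip

variable [Fintype α] (φ : FreeGroup α ≃* FreeGroup α)

/-- Lipschitz constant of `φ`. -/
def Lip : ℕ := (Finset.univ.sup fun a : α => ((φ (of a)).toWord.length)) + 1

lemma one_le_Lip : 1 ≤ Lip φ := Nat.le_add_left 1 _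

lemma len_apply_single (x : α × Bool) : (φ (mk [x])).toWord.length ≤ Lip φ := by
  obtain ⟨a, b⟩ := x
  have hbound : ((φ (of a)).toWord.length) ≤ Lip φ :=
    le_trans (Finset.le_sup (f := fun a : α => ((φ (of a)).toWord.length)) (Finset.mem_univ a)) (Nat.le_succ _)
  have hofa : of a = mk [(a, true)] := rfl
  cases b
  · have hinv : mk [(a, false)] = (of a)⁻¹ := by
      rw [hofa, FreeGroup.inv_mk]
      rfl
    rw [hinv, _root_.map_inv, len_inv]
    exact hbound
  · rw [← hofa]
    exact hbound

lemma len_apply_le (l : List (α × Bool)) :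
    (φ (mk l)).toWord.length ≤ Lip φ * l.length := by
  induction l with
  | nil =>
    rw [mk_nil, _root_.map_one, FreeGroup.toWord_one]
    simp
  | cons x t ih =>
    have hsplit : mk (x :: t) = mk [x] * mk t := by rw [mul_mk]; rfl
    rw [hsplit, _root_.map_mul]
    calc (φ (mk [x]) * φ (mk t)).toWord.length
        ≤ (φ (mk [x])).toWord.length + (φ (mk t)).toWord.length := len_mul_le _ _
      _ ≤ Lip φ + Lip φ * t.length := Nat.add_le_add (len_apply_single φ x) ih
      _ = Lip φ * (x :: t).length := by simp [List.length_cons, Nat.mul_succ, Nat.add_comm]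

lemma len_apply_ge {l : List (α × Bool)} (h : Reduced l) :
    l.length ≤ Lip φ.symm * (φ (mk l)).toWord.length := by
  have hle := len_apply_le φ.symm ((φ (mk l)).toWord)
  rw [mk_toWord] at hle
  have : φ.symm (φ (mk l)) = mk l := φ.symm_apply_apply _
  rw [this, toWord_mk_reduced h] at hle
  exact hle

/-- The bounded cancellation constant. -/
def CC : ℕ := 2 * Lip φ * Lip φ * Lip φ.symm + Lip φ

theorem bcc (l1 l2 : List (α × Bool)) (h : Reduced (l1 ++ l2)) {c : ℕ}
    (hc : IsCanc (φ (mk l1)).toWord (φ (mk l2)).toWord c) : c ≤ CC φ := by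
  classical
  set u := φ (mk l1) with hu
  set v := φ (mk l2) with hv
  obtain ⟨c₀, hc₀, heq⟩ := exists_canc u v
  have hcc : c = c₀ := (isCanc_unique hc₀ hc).symm
  subst hcc
  rcases Nat.eq_zero_or_pos l1.length with h1z | h1pos
  · have : l1 = [] := List.length_eq_zero_iff.mp h1z
    subst this
    have : u = 1 := by rw [hu, mk_nil, _root_.map_one]
    have hlen : u.toWord.length = 0 := by rw [this, FreeGroup.toWord_one]; rfl
    have := hc₀.1
    omega
  rcases Nat.eq_zero_or_pos l2.length with h2z | h2pos
  · have : l2 = [] := List.length_eq_zero_iff.mp h2z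
    subst this
    have : v = 1 := by rw [hv, mk_nil, _root_.map_one]
    have hlen : v.toWord.length = 0 := by rw [this, FreeGroup.toWord_one]; rfl
    have := hc₀.2.1
    omega
  set l := l1 ++ l2 with hl
  set n1 := l1.length
  set N := l.length with hN
  have hn1N : n1 ≤ N := by rw [hN, hl, List.length_append]; omega
  have hn1N' : n1 < N := by rw [hN, hl, List.length_append]; omega
  set p : ℕ → FreeGroup α := fun i => φ (mk (l.take i)) with hp
  have hp0 : p 0 = 1 := by
    show φ (mk (l.take 0)) = 1
    rw [List.take_zero, mk_nil, _root_.map_one]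
  have hpn1 : p n1 = u := by
    show φ (mk (l.take n1)) = u
    have h1 : l.take n1 = l1 := List.take_left
    rw [h1]
  have hpN : p N = u * v := by
    show φ (mk (l.take N)) = u * v
    have h1 : l.take N = l := List.take_length
    rw [h1, ← _root_.map_mul, mul_mk]
  -- the near point m
  have hcu : c ≤ u.toWord.length := hc₀.1
  have hcv : c ≤ v.toWord.length := hc₀.2.1
  set m := mk (u.toWord.take (u.toWord.length - c)) with hm
  obtain ⟨hbtw1, hmtw⟩ := btw_of_prefix (g := u) (n := u.toWord.length - c) (by omega)
  have hddmu : dd m u = c := by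
    have hsplit : m * mk (u.toWord.drop (u.toWord.length - c)) = u := by
      rw [hm, mul_mk, List.take_append_drop, mk_toWord]
    have : m⁻¹ * u = mk (u.toWord.drop (u.toWord.length - c)) :=
      inv_mul_eq_iff_eq_mul.mpr hsplit.symm
    unfold dd
    rw [this, toWord_mk_reduced ((reduced_toWord u).drop _), List.length_drop]
    omega
  have hddmuv : dd m (u * v) = v.toWord.length - c := by
    have hsplit : m * mk (v.toWord.drop c) = u * v := by
      rw [hm, mul_mk, ← heq, mk_toWord]
    have : m⁻¹ * (u * v) = mk (v.toWord.drop c) :=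
      inv_mul_eq_iff_eq_mul.mpr hsplit.symm
    unfold dd
    rw [this, toWord_mk_reduced ((reduced_toWord v).drop _), List.length_drop]
  have hdduuv : dd u (u * v) = v.toWord.length := by
    unfold dd
    rw [inv_mul_cancel_left]
  have hbtw2 : Btw u m (u * v) := by
    unfold Btw
    rw [dd_symm u m, hddmu, hddmuv, hdduuv]
    omega
  -- crossings
  have hbtw1' : Btw (p 0) m (p n1) := by rw [hp0, hpn1]; exact hbtw1
  have hbtw2' : Btw (p n1) m (p N) := by rw [hpn1, hpN]; exact hbtw2
  obtain ⟨j, hj0, hjn1, hjbtw⟩ := btw_crossing p m n1 0 n1 (by omega) h1pos hbtw1'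
  obtain ⟨k, hkn1, hkN, hkbtw⟩ := btw_crossing p m (N - n1) n1 N (by omega) hn1N' hbtw2'
  -- step bound
  have dstep : ∀ i, i < N → dd (p i) (p (i + 1)) ≤ Lip φ := by
    intro i hi
    have htake : l.take i ++ [l.get ⟨i, hi⟩] = l.take (i + 1) := by
      simpa [List.concat_eq_append, List.get_eq_getElem] using List.take_concat_get l i hi
    have hsplit : mk (l.take (i + 1)) = mk (l.take i) * mk [l.get ⟨i, hi⟩] := by
      rw [mul_mk, htake]
    have : (p i)⁻¹ * p (i + 1) = φ (mk [l.get ⟨i, hi⟩]) := by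
      show (φ (mk (l.take i)))⁻¹ * φ (mk (l.take (i + 1))) = _
      rw [hsplit, _root_.map_mul]
      group
    unfold dd
    rw [this]
    simpa using len_apply_single φ (l.get ⟨i, hi⟩)
  -- chain bound
  have dchain : ∀ d a, a + d ≤ N → dd (p a) (p (a + d)) ≤ Lip φ * d := by
    intro d
    induction d with
    | zero => intro a _; simp [dd_self]
    | succ d ih =>
      intro a ha
      calc dd (p a) (p (a + (d + 1)))
          ≤ dd (p a) (p (a + d)) + dd (p (a + d)) (p (a + d + 1)) := by
            have : a + (d + 1) = (a + d) + 1 := by omega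
            rw [this]
            exact dd_triangle _ _ _
        _ ≤ Lip φ * d + Lip φ := Nat.add_le_add (ih a (by omega)) (dstep (a + d) (by omega))
        _ = Lip φ * (d + 1) := by rw [Nat.mul_succ]
  -- lower bound
  have dlow : ∀ a b, a ≤ b → b ≤ N → b - a ≤ Lip φ.symm * dd (p a) (p b) := by
    intro a b hab hbN
    set mid := (l.take b).drop a with hmid
    have hmred : Reduced mid := (h.take b).drop a
    have hsplit : mk (l.take b) = mk (l.take a) * mk mid := by
      rw [mul_mk, hmid]
      congr 1
      conv_lhs => rw [← List.take_append_drop a (l.take b)]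
      rw [List.take_take, min_eq_left hab]
    have hpab : (p a)⁻¹ * p b = φ (mk mid) := by
      show (φ (mk (l.take a)))⁻¹ * φ (mk (l.take b)) = φ (mk mid)
      rw [hsplit, _root_.map_mul]
      group
    have hmlen : mid.length = b - a := by
      rw [hmid]
      simp only [List.length_drop, List.length_take]
      omega
    have hge := len_apply_ge φ hmred
    rw [hmlen] at hge
    unfold dd
    rw [hpab]
    exact hge
  -- assembly
  have hjm : dd (p j) m ≤ Lip φ := by
    have h1 : dd (p j) m + dd m (p (j + 1)) = dd (p j) (p (j + 1)) := hjbtw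
    have h2 := dstep j (by omega)
    omega
  have hkm : dd (p k) m ≤ Lip φ := by
    have h1 : dd (p k) m + dd m (p (k + 1)) = dd (p k) (p (k + 1)) := hkbtw
    have h2 := dstep k (by omega)
    omega
  have hjk : k - j ≤ Lip φ.symm * (2 * Lip φ) := by
    have hd1 := dlow j k (by omega) (by omega)
    have hd2 : dd (p j) (p k) ≤ dd (p j) m + dd m (p k) := dd_triangle _ _ _
    have hd3 : dd m (p k) = dd (p k) m := dd_symm _ _
    have hd4 : dd (p j) (p k) ≤ 2 * Lip φ := by omega
    calc k - j ≤ Lip φ.symm * dd (p j) (p k) := hd1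
      _ ≤ Lip φ.symm * (2 * Lip φ) := Nat.mul_le_mul_left _ hd4
  have hcm2 : c ≤ Lip φ + Lip φ * (n1 - j) := by
    have hm1 : dd m (p n1) = c := by rw [hpn1]; exact hddmu
    have hm2 : dd m (p n1) ≤ dd m (p j) + dd (p j) (p n1) := dd_triangle _ _ _
    have hm3 : dd m (p j) = dd (p j) m := dd_symm _ _
    have hm4 : dd (p j) (p n1) ≤ Lip φ * (n1 - j) := by
      have := dchain (n1 - j) j (by omega)
      rw [show j + (n1 - j) = n1 by omega] at this
      exact this
    omega
  calc c ≤ Lip φ + Lip φ * (n1 - j) := hcm2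
    _ ≤ Lip φ + Lip φ * (Lip φ.symm * (2 * Lip φ)) := by
        have hfin : n1 - j ≤ Lip φ.symm * (2 * Lip φ) := le_trans (by omega) hjk
        exact Nat.add_le_add_left (Nat.mul_le_mul_left _ hfin) _
    _ = CC φ := by unfold CC; ring

end Lip

section Bdry

@[simp] lemma pre_length (ξ : Bd α) (m : ℕ) : (pre ξ m).length = m := by simp [pre]

lemma pre_getElem? (ξ : Bd α) {i m : ℕ} (h : i < m) : (pre ξ m)[i]? = some (ξ.1 i) := by
  rw [pre, List.getElem?_ofFn]
  simp [List.ofFnNthVal, h]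

lemma pre_getElem (ξ : Bd α) {i m : ℕ} (h : i < m) :
    (pre ξ m)[i]'(by simpa using h) = ξ.1 i := by
  have := pre_getElem? ξ h
  rwa [List.getElem?_eq_getElem (by simpa using h), Option.some_inj] at this

lemma pre_reduced (ξ : Bd α) (m : ℕ) : Reduced (pre ξ m) := by
  rw [Reduced, List.Chain', List.isChain_iff_getElem]
  intro i hi
  simp only [pre, List.get_eq_getElem, List.getElem_ofFn]
  exact ξ.2 i

lemma pre_take (ξ : Bd α) {k m : ℕ} (h : k ≤ m) : (pre ξ m).take k = pre ξ k := by
  apply List.ext_getElem?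
  intro i
  by_cases hik : i < k
  · rw [List.getElem?_take_of_lt hik, pre_getElem? ξ (lt_of_lt_of_le hik h), pre_getElem? ξ hik]
  · rw [List.getElem?_eq_none_iff.mpr (by simp; omega),
      List.getElem?_eq_none_iff.mpr (by simp; omega)]

lemma pre_succ (ξ : Bd α) (m : ℕ) : pre ξ (m + 1) = pre ξ m ++ [ξ.1 m] := by
  apply List.ext_getElem?
  intro i
  by_cases hi : i < m
  · rw [pre_getElem? _ (by omega), List.getElem?_append_left (by simpa using hi),
      pre_getElem? _ hi]
  · by_cases him : i = m
    · subst him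
      rw [pre_getElem? _ (by omega), List.getElem?_append_right (by simp)]
      simp
    · rw [List.getElem?_eq_none_iff.mpr (by simp; omega),
        List.getElem?_eq_none_iff.mpr (by simp; omega)]

lemma bd_ext {ξ η : Bd α} (h : ∀ i, ξ.1 i = η.1 i) : ξ = η := Subtype.ext (funext h)

lemma mem_cyl_iff {l : List (α × Bool)} {ξ : Bd α} : ξ ∈ Cyl l ↔ pre ξ l.length = l := by
  constructor
  · intro hm
    apply List.ext_getElem?
    intro i
    by_cases hi : i < l.length
    · rw [pre_getElem? ξ hi, hm i hi]
      simp [List.getElem?_eq_getElem hi]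
    · rw [List.getElem?_eq_none_iff.mpr (by simpa using by omega),
        List.getElem?_eq_none_iff.mpr (by omega)]
  · intro hm i hi
    have h2 : (pre ξ l.length)[i]? = some (ξ.1 i) := pre_getElem? ξ hi
    rw [hm, List.getElem?_eq_getElem hi] at h2
    simpa [List.get_eq_getElem] using (Option.some_inj.mp h2).symm

/-- Shift of a boundary point. -/
def shf (k : ℕ) (ξ : Bd α) : Bd α :=
  ⟨fun n => ξ.1 (n + k), fun n => by
    have := ξ.2 (n + k)
    rwa [show n + k + 1 = n + 1 + k by omega] at this⟩

@[simp] lemma shf_val (k : ℕ) (ξ : Bd α) (n : ℕ) : (shf k ξ).1 n = ξ.1 (n + k) := rfl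

/-- Concatenation of a reduced word and a compatible boundary point. -/
def glue (l : List (α × Bool)) (ζ : Bd α) (hred : Reduced l)
    (hj : ∀ x ∈ l.getLast?, ζ.1 0 ≠ linv x) : Bd α :=
  ⟨fun n => if h : n < l.length then l[n] else ζ.1 (n - l.length), by
    intro n
    by_cases h1 : n + 1 < l.length
    · have h0 : n < l.length := by omega
      simp only [dif_pos h1, dif_pos h0]
      have := (List.isChain_iff_getElem.mp hred) n (by omega)
      simpa [List.get_eq_getElem] using this
    · by_cases h0 : n < l.length
      · have hn : n = l.length - 1 := by omega
        simp only [dif_neg h1, dif_pos h0]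
        have hz : n + 1 - l.length = 0 := by omega
        rw [hz]
        apply hj
        rw [List.getLast?_eq_getElem?, List.getElem?_eq_getElem (by omega)]
        simp only [Option.mem_def, Option.some_inj]
        congr 1
        omega
      · simp only [dif_neg h1, dif_neg h0]
        have := ζ.2 (n - l.length)
        rwa [show n - l.length + 1 = n + 1 - l.length by omega] at this⟩

lemma glue_val_lt {l : List (α × Bool)} {ζ : Bd α} {hred hj} {n : ℕ} (h : n < l.length) :
    (glue l ζ hred hj).1 n = l[n] := by simp [glue, h]

lemma glue_val_ge {l : List (α × Bool)} {ζ : Bd α} {hred hj} {n : ℕ} (h : l.length ≤ n) :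
    (glue l ζ hred hj).1 n = ζ.1 (n - l.length) := by
  simp only [glue]
  rw [dif_neg (by omega)]

lemma glue_mem_cyl {l : List (α × Bool)} {ζ : Bd α} {hred hj} :
    glue l ζ hred hj ∈ Cyl l := by
  intro i hi
  rw [glue_val_lt hi]
  simp [List.get_eq_getElem]

lemma pre_glue {l : List (α × Bool)} {ζ : Bd α} {hred hj} {m : ℕ} (h : l.length ≤ m) :
    pre (glue l ζ hred hj) m = l ++ pre ζ (m - l.length) := by
  apply List.ext_getElem?
  intro i
  by_cases hi : i < m
  · rw [pre_getElem? _ hi]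
    by_cases hil : i < l.length
    · rw [List.getElem?_append_left hil, glue_val_lt hil, List.getElem?_eq_getElem hil]
    · rw [List.getElem?_append_right (le_of_not_gt hil), glue_val_ge (le_of_not_gt hil),
        pre_getElem? _ (by omega)]
  · rw [List.getElem?_eq_none_iff.mpr (by simpa using by omega),
      List.getElem?_eq_none_iff.mpr (by simp; omega)]

lemma cyl_junction {l : List (α × Bool)} {ξ : Bd α} (hm : ξ ∈ Cyl l) :
    ∀ x ∈ l.getLast?, (shf l.length ξ).1 0 ≠ linv x := by
  intro x hx
  rcases Nat.eq_zero_or_pos l.length with h0 | h0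
  · rw [List.getLast?_eq_getElem?, List.getElem?_eq_none_iff.mpr (by omega)] at hx
    simp at hx
  · rw [List.getLast?_eq_getElem?, List.getElem?_eq_getElem (by omega)] at hx
    have hx' : x = l[l.length - 1] := by simpa using hx.symm
    subst hx'
    rw [shf_val]
    have hlast : ξ.1 (l.length - 1) = l[l.length - 1] := by
      have := hm (l.length - 1) (by omega)
      simpa [List.get_eq_getElem] using this
    rw [← hlast, show 0 + l.length = (l.length - 1) + 1 by omega]
    exact ξ.2 (l.length - 1)

lemma glue_shf {l : List (α × Bool)} {ξ : Bd α} (hm : ξ ∈ Cyl l) (hred : Reduced l) :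
    glue l (shf l.length ξ) hred (cyl_junction hm) = ξ := by
  apply bd_ext
  intro n
  by_cases hn : n < l.length
  · rw [glue_val_lt hn]
    exact (hm n hn).symm ▸ by simp [List.get_eq_getElem, (hm n hn)]
  · rw [glue_val_ge (by omega), shf_val,
      show n - l.length + l.length = n by omega]

end Bdry

section Main

variable [Fintype α] (φ : FreeGroup α ≃* FreeGroup α) (Φ : Bd α → Bd α)

/-- Cancellation between a reduced word and an infinite reduced word. -/
def InfCanc (l : List (α × Bool)) (θ : Bd α) (c : ℕ) : Prop :=
  c ≤ l.length ∧ (∀ i < c, some (θ.1 i) = (l[l.length - 1 - i]?).map linv) ∧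
  (c < l.length → some (θ.1 c) ≠ (l[l.length - 1 - c]?).map linv)

lemma infCanc_unique {l : List (α × Bool)} {θ : Bd α} {c c' : ℕ}
    (h : InfCanc l θ c) (h' : InfCanc l θ c') : c = c' := by
  rcases h with ⟨ha, hm, hf⟩
  rcases h' with ⟨ha', hm', hf'⟩
  by_contra hne
  rcases Nat.lt_or_ge c c' with hlt | hge
  · exact hf (by omega) (hm' c hlt)
  · exact hf' (by omega) (hm c' (by omega))

lemma exists_infCanc (l : List (α × Bool)) (θ : Bd α) : ∃ c, InfCanc l θ c := by
  classical
  set P : ℕ → Prop := fun c => ∀ i < c, some (θ.1 i) = (l[l.length - 1 - i]?).map linv with hP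
  refine ⟨Nat.findGreatest P l.length, Nat.findGreatest_le l.length, ?_, ?_⟩
  · exact Nat.findGreatest_spec (P := P) (Nat.zero_le _) (fun i hi => absurd hi (by omega))
  · intro hlt hmatch
    have hnotP : ¬ P (Nat.findGreatest P l.length + 1) :=
      Nat.findGreatest_is_greatest (P := P) (Nat.lt_succ_self _) (by omega)
    apply hnotP
    intro i hi
    rcases Nat.lt_or_ge i (Nat.findGreatest P l.length) with h1 | h1
    · exact Nat.findGreatest_spec (P := P) (Nat.zero_le _) (by intro j hj; omega) i h1
    · have : i = Nat.findGreatest P l.length := by omega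
      subst this
      exact hmatch

/-- extension facts from `ExtendsBd`. -/
lemma ext_facts (hΦ : ExtendsBd φ Φ) (ξ : Bd α) (k : ℕ) :
    ∃ n, ∀ m, n ≤ m → k ≤ (φ (mk (pre ξ m))).toWord.length ∧
      ∀ i < k, ((φ (mk (pre ξ m))).toWord)[i]? = some ((Φ ξ).1 i) := by
  obtain ⟨n, hn⟩ := hΦ ξ k
  refine ⟨n, fun m hm => ?_⟩
  have htake := hn m hm
  have hofn : (List.ofFn fun i : Fin k => (Φ ξ).1 i) = pre (Φ ξ) k := rfl
  rw [hofn] at htake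
  have hlen : k ≤ (φ (mk (pre ξ m))).toWord.length := by
    have := congrArg List.length htake
    simp only [List.length_take, pre_length] at this
    omega
  refine ⟨hlen, fun i hi => ?_⟩
  have h1 : ((φ (mk (pre ξ m))).toWord.take k)[i]? = (pre (Φ ξ) k)[i]? := by rw [htake]
  rw [List.getElem?_take_of_lt hi, pre_getElem? _ hi] at h1
  exact h1

/-- Bounded cancellation against boundary images. -/
lemma bcc_inf (hΦ : ExtendsBd φ Φ) (l : List (α × Bool)) (hred : Reduced l) (ζ : Bd α)
    (hj : ∀ x ∈ l.getLast?, ζ.1 0 ≠ linv x) {c : ℕ}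
    (hc : InfCanc (φ (mk l)).toWord (Φ ζ) c) : c ≤ CC φ := by
  by_contra hbig
  push_neg at hbig
  set g := φ (mk l) with hg
  obtain ⟨n, hn⟩ := ext_facts φ Φ hΦ ζ (CC φ + 1)
  set m := n + 1 with hm
  obtain ⟨hhlen, hhget⟩ := hn m (by omega)
  set h := φ (mk (pre ζ m)) with hh
  have hred2 : Reduced (l ++ pre ζ m) := by
    apply reduced_append hred (pre_reduced ζ m)
    intro x hx y hy
    have hy' : y = ζ.1 0 := by
      have : (pre ζ m).head? = (pre ζ m)[0]? := by rw [List.head?_eq_getElem?]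
      rw [this, pre_getElem? _ (by omega)] at hy
      simpa using hy.symm
    subst hy'
    exact hj x hx
  obtain ⟨c₀, hc₀, heq⟩ := exists_canc g h
  have hc₀CC : c₀ ≤ CC φ := bcc φ l (pre ζ m) hred2 hc₀
  -- c₀ < c, so IsCanc failure at c₀ contradicts InfCanc matching
  have hc₀g : c₀ < g.toWord.length := by
    have := hc.1
    omega
  have hc₀h : c₀ < h.toWord.length := by omega
  have hfail := hc₀.2.2.2 hc₀g hc₀h
  apply hfail
  rw [hhget c₀ (by omega)]
  exact (hc.2.1 c₀ (by omega)).symm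

/-- Key formula: the boundary image of a concatenation. -/
lemma key_formula (hΦ : ExtendsBd φ Φ) (l : List (α × Bool)) (hred : Reduced l) (ζ : Bd α)
    (hj : ∀ x ∈ l.getLast?, ζ.1 0 ≠ linv x) {c : ℕ}
    (hc : InfCanc (φ (mk l)).toWord (Φ ζ) c) (n : ℕ) :
    some ((Φ (glue l ζ hred hj)).1 n) =
      if n < (φ (mk l)).toWord.length - c then ((φ (mk l)).toWord)[n]?
      else some ((Φ ζ).1 (n - ((φ (mk l)).toWord.length - c) + c)) := by
  set g := φ (mk l) with hg
  set ξ := glue l ζ hred hj with hξ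
  obtain ⟨n₁, hn₁⟩ := ext_facts φ Φ hΦ ξ (n + 1)
  obtain ⟨n₂, hn₂⟩ := ext_facts φ Φ hΦ ζ (n + c + 2)
  set m₂ := n₂ + 1 with hm₂
  set m := max n₁ (m₂ + l.length) with hm
  have hmn₁ : n₁ ≤ m := le_max_left _ _
  have hml : m₂ + l.length ≤ m := le_max_right _ _
  have hpre : pre ξ m = l ++ pre ζ (m - l.length) := pre_glue (by omega)
  have hm₂' : m - l.length = m₂ + (m - l.length - m₂) := by omega
  set m₃ := m - l.length with hm₃
  have hm₃n₂ : n₂ ≤ m₃ := by omega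
  obtain ⟨hhlen, hhget⟩ := hn₂ m₃ (by omega)
  set h := φ (mk (pre ζ m₃)) with hh
  have hsplit : φ (mk (pre ξ m)) = g * h := by
    rw [hpre, ← mul_mk, _root_.map_mul]
  have hred2 : Reduced (l ++ pre ζ m₃) := by
    apply reduced_append hred (pre_reduced ζ m₃)
    intro x hx y hy
    have hy' : y = ζ.1 0 := by
      have he : (pre ζ m₃).head? = (pre ζ m₃)[0]? := by rw [List.head?_eq_getElem?]
      rw [he, pre_getElem? _ (by omega)] at hy
      simpa using hy.symm
    subst hy'
    exact hj x hx
  obtain ⟨c₀, hc₀, heq⟩ := exists_canc g h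
  have hc₀CC : c₀ ≤ CC φ := bcc φ l (pre ζ m₃) hred2 hc₀
  have hcCC : c ≤ CC φ := bcc_inf φ Φ hΦ l hred ζ hj hc
  -- c₀ = c
  have hc₀c : c₀ = c := by
    rcases Nat.lt_trichotomy c₀ c with hlt | heqq | hgt
    · exfalso
      have hc₀g : c₀ < g.toWord.length := by have := hc.1; omega
      have hc₀h : c₀ < h.toWord.length := by omega
      apply hc₀.2.2.2 hc₀g hc₀h
      rw [hhget c₀ (by omega)]
      exact (hc.2.1 c₀ hlt).symm
    · exact heqq
    · exfalso
      have hcg : c < g.toWord.length := by have := hc₀.1; omega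
      apply hc.2.2 hcg
      rw [hc₀.2.2.1 c hgt, hhget c (by omega)]
  subst hc₀c
  have hξn := (hn₁ m hmn₁).2 n (by omega)
  rw [hsplit, heq] at hξn
  rw [← hξn]
  by_cases hcase : n < g.toWord.length - c₀
  · rw [if_pos hcase, List.getElem?_append_left (by simpa using by omega),
      List.getElem?_take_of_lt hcase]
  · rw [if_neg hcase, List.getElem?_append_right (by simpa using by omega)]
    rw [List.length_take, Nat.min_eq_left (Nat.sub_le _ _), List.getElem?_drop,
      hhget _ (by omega)]
    rw [show c₀ + (n - (g.toWord.length - c₀)) = n - (g.toWord.length - c₀) + c₀ from by omega]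

section Psi

variable [Nonempty α]

/-- Approximants to the inverse boundary map. -/
def qq (η : Bd α) (m : ℕ) : List (α × Bool) := (φ.symm (mk (pre η m))).toWord

/-- Stabilization index. -/
def mIdx (i : ℕ) : ℕ := Lip φ * (i + CC φ.symm + 1)

lemma mIdx_mono {i j : ℕ} (h : i ≤ j) : mIdx φ i ≤ mIdx φ j :=
  Nat.mul_le_mul_left _ (by omega)

lemma mIdx_ge (i : ℕ) : i + 1 ≤ mIdx φ i := by
  have h1 := one_le_Lip φ
  calc i + 1 ≤ 1 * (i + CC φ.symm + 1) := by omega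
    _ ≤ Lip φ * (i + CC φ.symm + 1) := Nat.mul_le_mul_right _ h1
    _ = mIdx φ i := rfl

lemma qq_len (η : Bd α) (m : ℕ) : m ≤ Lip φ * (qq φ η m).length := by
  have h := len_apply_ge (φ := φ.symm) (pre_reduced η m)
  simp only [MulEquiv.symm_symm, pre_length] at h
  exact h

lemma qq_long {η : Bd α} {i m : ℕ} (h : mIdx φ i ≤ m) :
    i + CC φ.symm < (qq φ η m).length := by
  have h2 := qq_len φ η m
  have h3 : Lip φ * (i + CC φ.symm + 1) ≤ Lip φ * (qq φ η m).length := le_trans h h2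
  have h4 := Nat.le_of_mul_le_mul_left h3 (by have := one_le_Lip φ; omega)
  omega

lemma qq_step (η : Bd α) (m : ℕ) {i : ℕ} (h : i + CC φ.symm < (qq φ η m).length) :
    (qq φ η (m + 1))[i]? = (qq φ η m)[i]? := by
  have hsplit : mk (pre η (m + 1)) = mk (pre η m) * mk [η.1 m] := by
    rw [mul_mk, pre_succ]
  obtain ⟨c, hc, heq⟩ := exists_canc (φ.symm (mk (pre η m))) (φ.symm (mk [η.1 m]))
  have hred2 : Reduced (pre η m ++ [η.1 m]) := by
    rw [← pre_succ]; exact pre_reduced η (m + 1)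
  have hcC : c ≤ CC φ.symm := bcc φ.symm _ _ hred2 hc
  have h' : i + CC φ.symm < (φ.symm (mk (pre η m))).toWord.length := h
  show (φ.symm (mk (pre η (m + 1)))).toWord[i]? = (φ.symm (mk (pre η m))).toWord[i]?
  rw [hsplit, _root_.map_mul, heq,
    List.getElem?_append_left (by rw [List.length_take]; exact by omega),
    List.getElem?_take_of_lt (by omega)]

lemma qq_stable (η : Bd α) {i m m' : ℕ} (h1 : mIdx φ i ≤ m) (h2 : m ≤ m') :
    (qq φ η m')[i]? = (qq φ η m)[i]? := by
  obtain ⟨d, rfl⟩ := Nat.exists_eq_add_of_le h2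
  clear h2
  induction d with
  | zero => rfl
  | succ d ih =>
    rw [show m + (d + 1) = (m + d) + 1 from rfl,
      qq_step φ η (m + d) (qq_long φ (le_trans h1 (by omega))), ih]

/-- The letters of the inverse boundary image. -/
noncomputable def PsiW (η : Bd α) (i : ℕ) : α × Bool :=
  ((qq φ η (mIdx φ i))[i]?).getD (Classical.arbitrary _)

lemma psiW_spec (η : Bd α) (i : ℕ) {m : ℕ} (h : mIdx φ i ≤ m) :
    (qq φ η m)[i]? = some (PsiW φ η i) := by
  rw [qq_stable φ η (le_refl (mIdx φ i)) h]
  have hlt : i < (qq φ η (mIdx φ i)).length := by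
    have := qq_long (η := η) φ (le_refl (mIdx φ i)); omega
  rw [List.getElem?_eq_getElem hlt]
  unfold PsiW
  rw [List.getElem?_eq_getElem hlt]
  rfl

lemma psiW_red (η : Bd α) (i : ℕ) : PsiW φ η (i + 1) ≠ linv (PsiW φ η i) := by
  set m := mIdx φ (i + 1) with hm
  have h1 : (qq φ η m)[i]? = some (PsiW φ η i) := psiW_spec φ η i (mIdx_mono φ (by omega))
  have h2 : (qq φ η m)[i + 1]? = some (PsiW φ η (i + 1)) := psiW_spec φ η (i + 1) (le_refl _)
  have hlen : i + 1 < (qq φ η m).length := by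
    by_contra hcon
    rw [List.getElem?_eq_none_iff.mpr (by omega)] at h2
    exact absurd h2 (by simp)
  have hlen' : i + 1 < (φ.symm (mk (pre η m))).toWord.length := hlen
  have hch := (List.isChain_iff_getElem.mp (reduced_toWord (φ.symm (mk (pre η m))))) i (by omega)
  have e1 : (qq φ η m)[i] = PsiW φ η i := by
    rw [List.getElem?_eq_getElem (by omega)] at h1
    exact Option.some_inj.mp h1
  have e2 : (qq φ η m)[i + 1]'(by omega) = PsiW φ η (i + 1) := by
    rw [List.getElem?_eq_getElem (by omega)] at h2
    exact Option.some_inj.mp h2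
  show ¬ _
  rw [← e1, ← e2]
  exact hch

/-- Inverse boundary map. -/
noncomputable def Psi (η : Bd α) : Bd α := ⟨fun i => PsiW φ η i, fun i => psiW_red φ η i⟩

lemma psi_local {η η' : Bd α} {i : ℕ} (h : pre η (mIdx φ i) = pre η' (mIdx φ i)) :
    PsiW φ η i = PsiW φ η' i := by
  unfold PsiW qq
  rw [h]

lemma psi_phi (hΦ : ExtendsBd φ Φ) (ξ : Bd α) : Psi φ (Φ ξ) = ξ := by
  apply bd_ext
  intro i
  show PsiW φ (Φ ξ) i = ξ.1 i
  set m := mIdx φ i with hm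
  obtain ⟨M, hM⟩ := ext_facts φ Φ hΦ ξ m
  obtain ⟨hlen, hget⟩ := hM M (le_refl _)
  have hpre : pre (Φ ξ) m = ((φ (mk (pre ξ M))).toWord).take m := by
    apply List.ext_getElem?
    intro j
    by_cases hj : j < m
    · rw [pre_getElem? _ hj, List.getElem?_take_of_lt hj, hget j hj]
    · rw [List.getElem?_eq_none_iff.mpr (by simp; omega),
        List.getElem?_eq_none_iff.mpr (by rw [List.length_take]; omega)]
  set z := φ (mk (pre ξ M)) with hz
  set r := z.toWord.drop m with hr
  have hzsplit : mk (pre (Φ ξ) m) * mk r = z := by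
    rw [hpre, hr, mul_mk, List.take_append_drop, mk_toWord]
  have hψsplit : φ.symm (mk (pre (Φ ξ) m)) * φ.symm (mk r) = mk (pre ξ M) := by
    rw [← _root_.map_mul, hzsplit, hz, MulEquiv.symm_apply_apply]
  obtain ⟨c, hc, heq⟩ := exists_canc (φ.symm (mk (pre (Φ ξ) m))) (φ.symm (mk r))
  have hredz : Reduced (pre (Φ ξ) m ++ r) := by
    rw [hpre, hr, List.take_append_drop]
    exact reduced_toWord z
  have hcC : c ≤ CC φ.symm := bcc φ.symm _ _ hredz hc
  rw [hψsplit, toWord_mk_reduced (pre_reduced ξ M)] at heq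
  have hqlong : i + CC φ.symm < (qq φ (Φ ξ) m).length := qq_long φ (le_refl _)
  have hq : (φ.symm (mk (pre (Φ ξ) m))).toWord = qq φ (Φ ξ) m := rfl
  rw [hq] at heq
  have hiM : i < M := by
    have hL := congrArg List.length heq
    rw [pre_length, List.length_append, List.length_take] at hL
    omega
  have hgoal : (pre ξ M)[i]? = (qq φ (Φ ξ) m)[i]? := by
    rw [heq, List.getElem?_append_left (by rw [List.length_take]; omega),
      List.getElem?_take_of_lt (by omega)]
  rw [pre_getElem? _ hiM, psiW_spec φ (Φ ξ) i (le_refl _)] at hgoal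
  exact (Option.some_inj.mp hgoal).symm

lemma phi_psi (hΦ : ExtendsBd φ Φ) (η : Bd α) : Φ (Psi φ η) = η := by
  apply bd_ext
  intro i
  set ξ := Psi φ η with hξ
  obtain ⟨n, hn⟩ := ext_facts φ Φ hΦ ξ (i + 1)
  set B := Lip φ.symm with hB
  set m' := max n (B * (i + 1 + CC φ + 1)) with hm'
  obtain ⟨hlen1, hget1⟩ := hn m' (le_max_left _ _)
  set m := mIdx φ m' with hm
  have hqlong : m' + CC φ.symm < (qq φ η m).length := qq_long φ (le_refl _)
  have hpre : pre ξ m' = (qq φ η m).take m' := by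
    apply List.ext_getElem?
    intro j
    by_cases hj : j < m'
    · rw [pre_getElem? _ hj, List.getElem?_take_of_lt hj,
        psiW_spec φ η j (le_trans (mIdx_mono φ (by omega)) (le_refl m))]
      rfl
    · rw [List.getElem?_eq_none_iff.mpr (by simp; omega),
        List.getElem?_eq_none_iff.mpr (by rw [List.length_take]; omega)]
  have hsplit : mk (pre ξ m') * mk ((qq φ η m).drop m') = φ.symm (mk (pre η m)) := by
    rw [hpre, mul_mk, List.take_append_drop]
    exact mk_toWord
  have hφsplit : φ (mk (pre ξ m')) * φ (mk ((qq φ η m).drop m')) = mk (pre η m) := by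
    rw [← _root_.map_mul, hsplit, MulEquiv.apply_symm_apply]
  obtain ⟨c, hc, heq⟩ := exists_canc (φ (mk (pre ξ m'))) (φ (mk ((qq φ η m).drop m')))
  have hredq : Reduced (pre ξ m' ++ (qq φ η m).drop m') := by
    rw [hpre, List.take_append_drop]
    exact reduced_toWord _
  have hcC : c ≤ CC φ := bcc φ _ _ hredq hc
  rw [hφsplit, toWord_mk_reduced (pre_reduced η m)] at heq
  set x := φ (mk (pre ξ m')) with hx
  have hBpos : 1 ≤ B := one_le_Lip φ.symm
  have hm'i : i + 1 + CC φ + 1 ≤ m' := by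
    have h1 : B * (i + 1 + CC φ + 1) ≤ m' := le_max_right _ _
    have h2 : 1 * (i + 1 + CC φ + 1) ≤ B * (i + 1 + CC φ + 1) :=
      Nat.mul_le_mul_right _ hBpos
    omega
  have hxlen : i + 1 + CC φ < x.toWord.length := by
    have h1 := len_apply_ge (φ := φ) (pre_reduced ξ m')
    rw [pre_length] at h1
    have h2 : B * (i + 1 + CC φ + 1) ≤ B * x.toWord.length := le_trans (le_max_right _ _) h1
    have h3 := Nat.le_of_mul_le_mul_left h2 (by omega)
    omega
  have hentry : (pre η m)[i]? = x.toWord[i]? := by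
    rw [heq, List.getElem?_append_left (by rw [List.length_take]; omega),
      List.getElem?_take_of_lt (by omega)]
  have him : i < m := by
    have := mIdx_ge φ m'
    omega
  rw [pre_getElem? _ him, hget1 i (by omega)] at hentry
  exact (Option.some_inj.mp hentry).symm

end Psi

end Main

section Extra

/-- Constant boundary point. -/
def constBd (b : α × Bool) : Bd α := ⟨fun _ => b, fun _ => (linv_ne b).symm⟩

lemma cyl_nonempty {s : List (α × Bool)} (hred : Reduced s) (hne : s ≠ []) :
    ∃ θ : Bd α, θ ∈ Cyl s := by
  refine ⟨glue s (constBd (s.getLast hne)) hred ?_, glue_mem_cyl⟩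
  intro x hx
  rw [List.getLast?_eq_getLast hne] at hx
  have hx' : x = s.getLast hne := by simpa using hx.symm
  subst hx'
  exact fun hcon => (linv_ne (s.getLast hne)) hcon.symm

lemma cyl_nil : Cyl ([] : List (α × Bool)) = (Set.univ : Set (Bd α)) := by
  ext ξ
  simp only [Set.mem_univ, iff_true]
  intro i hi
  simp at hi

end Extra

end S13

open S13

/-- For any automorphism `φ` there is a bound `M` such that the image of every cylinder
is a union of at most `M` cylinders. -/
theorem stmt13 [DecidableEq α] [Fintype α] [Nontrivial α]
    (φ : FreeGroup α ≃* FreeGroup α) (Φ : Bd α → Bd α) (hΦ : ExtendsBd φ Φ) :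
    ∃ M : ℕ, ∀ w : FreeGroup α, ∃ U : Finset (FreeGroup α), U.card ≤ M ∧
      Φ '' Cyl w.toWord = ⋃ u ∈ U, Cyl u.toWord := by
  classical
  set m₁ := max (CC φ + 2) (mIdx φ 0) with hm₁
  have hm₁CC : CC φ + 2 ≤ m₁ := le_max_left _ _
  have hm₁0 : mIdx φ 0 ≤ m₁ := le_max_right _ _
  refine ⟨(Fintype.card (α × Bool)) ^ m₁, fun w => ?_⟩
  by_cases hw1 : w = 1
  · -- w = 1 : the image of the full boundary is the full boundary
    refine ⟨{1}, ?_, ?_⟩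
    · have : (0 : ℕ) < Fintype.card (α × Bool) := Fintype.card_pos
      calc ({1} : Finset (FreeGroup α)).card = 1 := Finset.card_singleton _
        _ ≤ (Fintype.card (α × Bool)) ^ m₁ := Nat.one_le_pow _ _ this
    · subst hw1
      rw [FreeGroup.toWord_one, cyl_nil, Set.image_univ,
        Set.range_eq_univ.mpr (fun η => ⟨Psi φ η, phi_psi φ Φ hΦ η⟩)]
      ext η
      simp [cyl_nil, FreeGroup.toWord_one]
  · -- w ≠ 1
    set l := w.toWord with hl
    have hlne : l ≠ [] := fun hc => hw1 (FreeGroup.toWord_eq_nil_iff.mp hc)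
    have hlred : Reduced l := reduced_toWord w
    have hlpos : 0 < l.length := List.length_pos_iff.mpr hlne
    set a := l.getLast hlne with ha
    set g := φ (mk l) with hg
    set T : Set (Bd α) := Φ '' {ζ : Bd α | ζ.1 0 ≠ linv a} with hT
    set base : Finset (List (α × Bool)) :=
      (Finset.univ : Finset (Fin m₁ → α × Bool)).image List.ofFn with hbase
    set S : Finset (List (α × Bool)) :=
      base.filter (fun s => Reduced s ∧ Cyl s ⊆ T) with hS
    set cw : List (α × Bool) → ℕ := fun s =>
      Nat.findGreatest (fun ℓ => ∀ i < ℓ, s[i]? = ((g.toWord)[g.toWord.length - 1 - i]?).map linv)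
        (min g.toWord.length (m₁ - 1)) with hcw
    set hat : List (α × Bool) → List (α × Bool) := fun s =>
      g.toWord.take (g.toWord.length - cw s) ++ s.drop (cw s) with hhat
    refine ⟨S.image (fun s => mk (hat s)), ?_, ?_⟩
    · calc (S.image (fun s => mk (hat s))).card ≤ S.card := Finset.card_image_le
        _ ≤ base.card := Finset.card_filter_le _ _
        _ ≤ (Finset.univ : Finset (Fin m₁ → α × Bool)).card := Finset.card_image_le
        _ = (Fintype.card (α × Bool)) ^ m₁ := by
            rw [Finset.card_univ, Fintype.card_fun]
            simp
    -- basic facts about members of S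
    have hS_len : ∀ s ∈ S, s.length = m₁ := by
      intro s hs
      rw [hS, Finset.mem_filter] at hs
      obtain ⟨hsb, -⟩ := hs
      rw [hbase, Finset.mem_image] at hsb
      obtain ⟨f, -, rfl⟩ := hsb
      simp
    have hS_red : ∀ s ∈ S, Reduced s := by
      intro s hs
      rw [hS, Finset.mem_filter] at hs
      exact hs.2.1
    have hS_sub : ∀ s ∈ S, Cyl s ⊆ T := by
      intro s hs
      rw [hS, Finset.mem_filter] at hs
      exact hs.2.2
    have hj_of : ∀ ζ : Bd α, ζ.1 0 ≠ linv a → ∀ x ∈ l.getLast?, ζ.1 0 ≠ linv x := by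
      intro ζ hζ x hx
      rw [List.getLast?_eq_getLast hlne] at hx
      have : x = a := by simpa [ha] using hx.symm
      subst this
      exact hζ
    -- the cancellation of any boundary point of Cyl s (s ∈ S) with g is cw s
    have hcwspec : ∀ s ∈ S, ∀ θ : Bd α, θ ∈ Cyl s → ∀ c, InfCanc g.toWord θ c →
        c ≤ CC φ → cw s = c := by
      intro s hs θ hθ c hc hcC
      have hslen := hS_len s hs
      have hsget : ∀ i < m₁, s[i]? = some (θ.1 i) := by
        intro i hi
        have hilen : i < s.length := by omega
        have hv := hθ i hilen
        rw [List.getElem?_eq_getElem hilen, hv]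
        simp [List.get_eq_getElem]
      have hble : c ≤ min g.toWord.length (m₁ - 1) := by
        have h1 := hc.1
        omega
      have hPc : ∀ i < c, s[i]? = ((g.toWord)[g.toWord.length - 1 - i]?).map linv := by
        intro i hi
        rw [hsget i (by omega), hc.2.1 i hi]
      have hge : c ≤ cw s := Nat.le_findGreatest hble hPc
      have hle : cw s ≤ c := by
        by_contra hgt
        push_neg at hgt
        have hcwle : cw s ≤ min g.toWord.length (m₁ - 1) := Nat.findGreatest_le _
        have hPcw : ∀ i < cw s, s[i]? = ((g.toWord)[g.toWord.length - 1 - i]?).map linv :=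
          Nat.findGreatest_spec (P := fun ℓ => ∀ i < ℓ,
            s[i]? = ((g.toWord)[g.toWord.length - 1 - i]?).map linv)
            (Nat.zero_le _) (fun i hi => absurd hi (by omega))
        have hfail := hc.2.2 (by omega)
        apply hfail
        rw [← hPcw c hgt, hsget c (by omega)]
      omega
    -- common facts for s ∈ S
    have hcommon : ∀ s ∈ S, cw s ≤ CC φ ∧ cw s ≤ g.toWord.length ∧ Reduced (hat s) := by
      intro s hs
      have hslen := hS_len s hs
      have hsred := hS_red s hs
      have hsne : s ≠ [] := by
        intro hcon
        rw [hcon] at hslen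
        simp at hslen
        omega
      obtain ⟨θ, hθ⟩ := cyl_nonempty hsred hsne
      obtain ⟨ζ, hζD, hζθ⟩ := hS_sub s hs hθ
      obtain ⟨c, hc⟩ := exists_infCanc g.toWord θ
      have hcC : c ≤ CC φ := by
        rw [← hζθ] at hc
        exact bcc_inf φ Φ hΦ l hlred ζ (hj_of ζ hζD) hc
      have hcwc : cw s = c := hcwspec s hs θ hθ c hc hcC
      refine ⟨by omega, by rw [hcwc]; exact hc.1, ?_⟩
      -- reducedness of hat s
      show Reduced (g.toWord.take (g.toWord.length - cw s) ++ s.drop (cw s))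
      rw [hcwc]
      apply reduced_append ((reduced_toWord g).take _) (hsred.drop _)
      intro x hx y hy
      -- junction
      have htlen : 0 < g.toWord.length - c := by
        rcases Nat.eq_zero_or_pos (g.toWord.length - c) with h0 | h0
        · rw [h0] at hx
          simp at hx
        · exact h0
      have hclt : c < g.toWord.length := by omega
      have hyval : y = θ.1 c := by
        rw [List.head?_eq_getElem?, List.getElem?_drop] at hy
        have hsc : s[c + 0]? = some (θ.1 c) := by
          rw [Nat.add_zero]
          have hilen : c < s.length := by omega
          have hv := hθ c hilen
          rw [List.getElem?_eq_getElem hilen, hv]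
          simp [List.get_eq_getElem]
        rw [hsc] at hy
        simpa using hy.symm
      have hxval : x = g.toWord[g.toWord.length - 1 - c]'(by omega) := by
        rw [List.getLast?_eq_getElem?] at hx
        have hlt : (g.toWord.take (g.toWord.length - c)).length = g.toWord.length - c := by
          rw [List.length_take]; omega
        rw [hlt, List.getElem?_take_of_lt (by omega),
          List.getElem?_eq_getElem (show g.toWord.length - c - 1 < g.toWord.length by omega)]
          at hx
        simp only [Option.mem_def, Option.some_inj] at hx
        rw [← hx]
        congr 1
        omega
      subst hyval
      subst hxval
      intro hcon
      apply hc.2.2 (by omega)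
      rw [List.getElem?_eq_getElem (show g.toWord.length - 1 - c < g.toWord.length by omega),
        Option.map_some]
      exact congrArg some hcon
    have hhat_tw : ∀ s ∈ S, (mk (hat s)).toWord = hat s := fun s hs =>
      toWord_mk_reduced (hcommon s hs).2.2
    have hhat_get : ∀ s ∈ S, ∀ n : ℕ,
        (hat s)[n]? = if n < g.toWord.length - cw s then g.toWord[n]?
          else s[n - (g.toWord.length - cw s) + cw s]? := by
      intro s hs n
      have hc1 : cw s ≤ g.toWord.length := (hcommon s hs).2.1
      by_cases hcase : n < g.toWord.length - cw s
      · rw [if_pos hcase]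
        simp only [hhat]
        rw [List.getElem?_append_left (by rw [List.length_take]; omega),
          List.getElem?_take_of_lt hcase]
      · rw [if_neg hcase]
        simp only [hhat]
        rw [List.getElem?_append_right (by rw [List.length_take]; omega),
          List.length_take, List.getElem?_drop,
          show cw s + (n - min (g.toWord.length - cw s) g.toWord.length) =
            n - (g.toWord.length - cw s) + cw s from by omega]
    have hhat_len : ∀ s ∈ S, (hat s).length = (g.toWord.length - cw s) + (m₁ - cw s) := by
      intro s hs
      have hc1 : cw s ≤ g.toWord.length := (hcommon s hs).2.1
      simp only [hhat, List.length_append, List.length_take, List.length_drop, hS_len s hs]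
      omega
    -- the set equality
    ext η
    simp only [Set.mem_iUnion, Finset.mem_image, exists_prop, Set.mem_image]
    constructor
    · rintro ⟨ξ, hmem, rfl⟩
      set ζ := shf l.length ξ with hζ
      have hjζ := cyl_junction hmem
      have hglue : glue l ζ hlred hjζ = ξ := glue_shf hmem hlred
      set θ := Φ ζ with hθdef
      have hζD : ζ.1 0 ≠ linv a := by
        apply hjζ a
        rw [List.getLast?_eq_getLast hlne]
        rfl
      obtain ⟨c, hc⟩ := exists_infCanc g.toWord θ
      have hcC : c ≤ CC φ := bcc_inf φ Φ hΦ l hlred ζ hjζ hc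
      set s := pre θ m₁ with hsdef
      have hs_base : s ∈ base :=
        Finset.mem_image.mpr ⟨fun i => θ.1 i, Finset.mem_univ _, rfl⟩
      have hs_red : Reduced s := pre_reduced θ m₁
      have hs_sub : Cyl s ⊆ T := by
        intro θ' hθ'
        refine ⟨Psi φ θ', ?_, phi_psi φ Φ hΦ θ'⟩
        show (Psi φ θ').1 0 ≠ linv a
        have hpre' : pre θ' (mIdx φ 0) = pre θ (mIdx φ 0) := by
          have h1 : pre θ' m₁ = s := by
            have := mem_cyl_iff.mp hθ'
            rwa [hsdef, pre_length] at this
          rw [← pre_take θ' hm₁0, ← pre_take θ hm₁0, h1, hsdef]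
        have hp0 : PsiW φ θ' 0 = PsiW φ θ 0 := psi_local φ hpre'
        have hpθ : PsiW φ θ 0 = ζ.1 0 :=
          congrArg (fun t : Bd α => t.1 0) (psi_phi φ Φ hΦ ζ)
        show PsiW φ θ' 0 ≠ linv a
        rw [hp0, hpθ]
        exact hζD
      have hsS : s ∈ S := by
        rw [hS, Finset.mem_filter]
        exact ⟨hs_base, hs_red, hs_sub⟩
      have hθs : θ ∈ Cyl s := by
        rw [mem_cyl_iff, hsdef, pre_length]
      have hcwc : cw s = c := hcwspec s hsS θ hθs c hc hcC
      have hc1 : c ≤ g.toWord.length := hc.1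
      have hkey := key_formula φ Φ hΦ l hlred ζ hjζ hc
      refine ⟨mk (hat s), ⟨s, hsS, rfl⟩, ?_⟩
      rw [hhat_tw s hsS]
      intro n hn
      have hkn := hkey n
      rw [hglue] at hkn
      have hget := hhat_get s hsS n
      rw [hcwc] at hget
      have hval : (hat s)[n]? = some ((hat s).get ⟨n, hn⟩) := by
        rw [List.getElem?_eq_getElem hn]
        simp [List.get_eq_getElem]
      by_cases hcase : n < g.toWord.length - c
      · rw [if_pos hcase] at hkn hget
        apply Option.some_inj.mp
        rw [hkn, ← hget, hval]
      · rw [if_neg hcase] at hkn hget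
        have hidx : n - (g.toWord.length - c) + c < m₁ := by
          have := hhat_len s hsS
          rw [hcwc] at this
          omega
        have hsv : s[n - (g.toWord.length - c) + c]? =
            some (θ.1 (n - (g.toWord.length - c) + c)) := by
          have hv := hθs (n - (g.toWord.length - c) + c)
            (by rw [hsdef, pre_length]; omega)
          rw [List.getElem?_eq_getElem (by rw [hsdef, pre_length]; omega), hv]
          simp [List.get_eq_getElem]
        apply Option.some_inj.mp
        rw [hkn, ← hsv, ← hget, hval]
    · rintro ⟨u, ⟨s, hsS, rfl⟩, hin⟩
      rw [hhat_tw s hsS] at hin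
      have hslen := hS_len s hsS
      have hsred := hS_red s hsS
      obtain ⟨hcwCC, hcwg, hhatred⟩ := hcommon s hsS
      have hm₁c : cw s + 2 ≤ m₁ := by omega
      have hhlen := hhat_len s hsS
      have hhpos : 0 < (hat s).length := by omega
      -- the boundary point θ = s ++ tail of η
      have hj' : ∀ x ∈ s.getLast?, (shf (hat s).length η).1 0 ≠ linv x := by
        intro x hx
        have hsne : s ≠ [] := by
          intro hcon
          rw [hcon] at hslen
          simp at hslen
          omega
        rw [List.getLast?_eq_getElem?,
          List.getElem?_eq_getElem (show s.length - 1 < s.length by omega)] at hx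
        simp only [Option.mem_def, Option.some_inj] at hx
        -- last letter of hat s equals last letter of s
        have hlast : (hat s)[(hat s).length - 1]? = s[s.length - 1]? := by
          rw [hhat_get s hsS]
          rw [if_neg (by omega)]
          congr 1
          omega
        have hη1 : η.1 ((hat s).length - 1) = s[s.length - 1]'(by omega) := by
          have hv := hin ((hat s).length - 1) (by omega)
          rw [hv]
          have := hlast
          rw [List.getElem?_eq_getElem (show (hat s).length - 1 < (hat s).length by omega),
            List.getElem?_eq_getElem (show s.length - 1 < s.length by omega)] at this
          simp only [Option.some_inj] at this
          simp [List.get_eq_getElem, this]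
        rw [shf_val, Nat.zero_add, ← hx]
        have hred := η.2 ((hat s).length - 1)
        rw [show (hat s).length - 1 + 1 = (hat s).length from by omega] at hred
        rw [← hη1]
        exact hred
      set θ : Bd α := glue s (shf (hat s).length η) hsred hj' with hθdef
      have hθcyl : θ ∈ Cyl s := glue_mem_cyl
      obtain ⟨ζ, hζD, hζθ⟩ := hS_sub s hsS hθcyl
      obtain ⟨c', hc'⟩ := exists_infCanc g.toWord θ
      have hc'Φ : InfCanc g.toWord (Φ ζ) c' := by rwa [hζθ]
      have hc'C : c' ≤ CC φ := bcc_inf φ Φ hΦ l hlred ζ (hj_of ζ hζD) hc'Φ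
      have hcwc : cw s = c' := hcwspec s hsS θ hθcyl c' hc' hc'C
      refine ⟨glue l ζ hlred (hj_of ζ hζD), glue_mem_cyl, ?_⟩
      apply bd_ext
      intro n
      have hkn := key_formula φ Φ hΦ l hlred ζ (hj_of ζ hζD) hc'Φ n
      rw [hζθ] at hkn
      have hc'g : c' ≤ g.toWord.length := hc'.1
      apply Option.some_inj.mp
      rw [hkn]
      by_cases hcase : n < g.toWord.length - c'
      · rw [if_pos hcase]
        have hv := hin n (by omega)
        rw [List.getElem?_eq_getElem (show n < g.toWord.length by omega)]
        rw [hv]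
        have hget := hhat_get s hsS n
        rw [hcwc, if_pos hcase, List.getElem?_eq_getElem (show n < (hat s).length by omega),
          List.getElem?_eq_getElem (show n < g.toWord.length by omega)] at hget
        simp only [Option.some_inj] at hget
        simp [List.get_eq_getElem, hget]
      · rw [if_neg hcase]
        set j := n - (g.toWord.length - c') + c' with hj
        by_cases hjm : j < m₁
        · -- inside s
          have hθj : θ.1 j = s[j]'(by omega) := glue_val_lt (by omega)
          have hnlen : n < (hat s).length := by omega
          have hv := hin n hnlen
          have hget := hhat_get s hsS n
          rw [hcwc, if_neg hcase, ← hj,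
            List.getElem?_eq_getElem (show n < (hat s).length from hnlen),
            List.getElem?_eq_getElem (show j < s.length by omega)] at hget
          simp only [Option.some_inj] at hget
          rw [hθj, hv]
          simp [List.get_eq_getElem, hget]
        · -- in the tail of η
          have hθj : θ.1 j = η.1 (j - s.length + (hat s).length) := by
            rw [hθdef, glue_val_ge (by omega), shf_val]
          rw [hθj, hslen,
            show j - m₁ + (hat s).length = n from by omega]
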